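/- Suppose κ1 ≥ 1 is an integer, T ⊆ {1,...,x} is finite with |T| ≥ κ1. Then there exist a set A of nonnegative integers with |A| = κ1 and a set S ⊆ T such that A + S ⊆ T and |S| ≥ C(|T|, κ1) / C(x-1, κ1 - 1), where C(n,k) denotes the binomial coefficient. -/

import Mathlib

open Pointwise

/-- the minimum of a finset of naturals, with default 0 -/
private def mn (U : Finset ℕ) : ℕ := WithTop.untopD 0 U.min

private lemma mn_mem {U : Finset ℕ} (h : U.Nonempty) : mn U ∈ U := by
  obtain ⟨m, hm⟩ := Finset.min_of_nonempty h
  have := Finset.mem_of_min hm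
  have e : mn U = m := (congrArg (WithTop.untopD 0) hm).trans rfl
  rwa [e]

private lemma mn_le {U : Finset ℕ} {u : ℕ} (hu : u ∈ U) : mn U ≤ u := by
  obtain ⟨m, hm⟩ := Finset.min_of_nonempty ⟨u, hu⟩
  have h2 := Finset.min_le hu
  rw [hm] at h2
  have h3 : m ≤ u := by exact_mod_cast h2
  have e : mn U = m := (congrArg (WithTop.untopD 0) hm).trans rfl
  rwa [e]

/-- the normalized difference set -/
private def df (U : Finset ℕ) : Finset ℕ := U.image (fun u => u - mn U)

private lemma df_reconstruct {U : Finset ℕ} (h : U.Nonempty) :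
    (df U).image (fun a => a + mn U) = U := by
  ext v
  simp only [df, Finset.image_image, Finset.mem_image, Function.comp]
  constructor
  · rintro ⟨u, hu, rfl⟩
    have := mn_le hu
    have heq : u - mn U + mn U = u := by omega
    rwa [heq]
  · intro hv
    exact ⟨v, hv, by have := mn_le hv; omega⟩

theorem stmt_13 (κ₁ x : ℕ) (hκ : 1 ≤ κ₁) (T : Finset ℕ) (hT : T ⊆ Finset.Icc 1 x)
    (hTcard : κ₁ ≤ T.card) :
    ∃ (A S : Finset ℕ), A.card = κ₁ ∧ S ⊆ T ∧ A + S ⊆ T ∧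
      ((T.card.choose κ₁ : ℝ) / ((x - 1).choose (κ₁ - 1) : ℝ) ≤ S.card) := by
  classical
  -- basic facts
  have hxT : T.card ≤ x := by
    have := Finset.card_le_card hT
    simpa using this
  have hκx : κ₁ ≤ x := le_trans hTcard hxT
  set M := (x - 1).choose (κ₁ - 1) with hM
  have hMpos : 0 < M := Nat.choose_pos (by omega)
  set P := T.powersetCard κ₁ with hP
  -- properties of members of P
  have hPmem : ∀ U ∈ P, U ⊆ T ∧ U.card = κ₁ ∧ U.Nonempty := by
    intro U hU
    rw [hP, Finset.mem_powersetCard] at hU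
    exact ⟨hU.1, hU.2, Finset.card_pos.mp (by omega)⟩
  -- codomain of df
  set t := ((insert 0 (Finset.Icc 1 (x-1))).powersetCard κ₁).filter (fun D => 0 ∈ D) with ht
  have hmaps : ∀ U ∈ P, df U ∈ t := by
    intro U hU
    obtain ⟨hUT, hUcard, hUne⟩ := hPmem U hU
    have hmnU : mn U ∈ U := mn_mem hUne
    have hmn1 : 1 ≤ mn U := by
      have := hT (hUT hmnU); rw [Finset.mem_Icc] at this; exact this.1
    have hinj : Set.InjOn (fun u => u - mn U) ↑U := by
      intro a ha b hb hab
      have h1 := mn_le (Finset.mem_coe.mp ha)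
      have h2 := mn_le (Finset.mem_coe.mp hb)
      simp only at hab; omega
    rw [ht, Finset.mem_filter, Finset.mem_powersetCard]
    refine ⟨⟨?_, ?_⟩, ?_⟩
    · intro a ha
      rw [df, Finset.mem_image] at ha
      obtain ⟨u, hu, rfl⟩ := ha
      have h1 := mn_le hu
      have h2 := hT (hUT hu); rw [Finset.mem_Icc] at h2
      simp only [Finset.mem_insert, Finset.mem_Icc]
      omega
    · rw [df, Finset.card_image_of_injOn hinj, hUcard]
    · rw [df, Finset.mem_image]; exact ⟨mn U, hmnU, by omega⟩
  have htcard : t.card ≤ M := by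
    have hc : t.card ≤ ((Finset.Icc 1 (x-1)).powersetCard (κ₁ - 1)).card := by
      apply Finset.card_le_card_of_injOn (fun D => D.erase 0)
      · intro D hD
        simp only [Finset.mem_coe] at hD ⊢
        rw [ht, Finset.mem_filter, Finset.mem_powersetCard] at hD
        rw [Finset.mem_powersetCard]
        constructor
        · intro a ha
          rw [Finset.mem_erase] at ha
          have := hD.1.1 ha.2
          rw [Finset.mem_insert] at this
          rcases this with h | h
          · exact absurd h ha.1
          · exact h
        · rw [Finset.card_erase_of_mem hD.2, hD.1.2]
      · intro a ha b hb hab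
        rw [ht, Finset.coe_filter, Set.mem_setOf_eq] at ha hb
        have : insert 0 (a.erase 0) = insert 0 (b.erase 0) := congrArg (insert 0) hab
        rwa [Finset.insert_erase ha.2, Finset.insert_erase hb.2] at this
    rw [Finset.card_powersetCard, Nat.card_Icc] at hc
    simpa [hM] using hc
  -- t card gives the bound via choosing max fiber
  have hPcard : P.card = T.card.choose κ₁ := Finset.card_powersetCard κ₁ T
  have hPne : P.Nonempty := by
    obtain ⟨U, hU1, hU2⟩ := Finset.exists_subset_card_eq hTcard
    exact ⟨U, by rw [hP, Finset.mem_powersetCard]; exact ⟨hU1, hU2⟩⟩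
  have htne : t.Nonempty := by
    obtain ⟨U, hU⟩ := hPne
    exact ⟨df U, hmaps U hU⟩
  obtain ⟨D, hDt, hDmax⟩ := Finset.exists_max_image t
    (fun b => (P.filter (fun U => df U = b)).card) htne
  set F := P.filter (fun U => df U = D) with hF
  have hsum : P.card = ∑ b ∈ t, (P.filter (fun U => df U = b)).card :=
    Finset.card_eq_sum_card_fiberwise hmaps
  have hbound : P.card ≤ t.card * F.card := by
    rw [hsum]
    calc ∑ b ∈ t, (P.filter (fun U => df U = b)).card
        ≤ t.card • F.card := Finset.sum_le_card_nsmul _ _ _ (fun b hb => hDmax b hb)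
      _ = t.card * F.card := by rw [smul_eq_mul]
  -- define S
  set S := F.image mn with hS
  have hFP : ∀ U ∈ F, U ∈ P ∧ df U = D := fun U hU => by
    rw [hF, Finset.mem_filter] at hU; exact hU
  have hScard : S.card = F.card := by
    apply Finset.card_image_of_injOn
    intro U hU V hV hUV
    obtain ⟨hUP, hUD⟩ := hFP U (Finset.mem_coe.mp hU)
    obtain ⟨hVP, hVD⟩ := hFP V (Finset.mem_coe.mp hV)
    have hUne := (hPmem U hUP).2.2
    have hVne := (hPmem V hVP).2.2
    have h1 : (df U).image (fun a => a + mn U) = U := df_reconstruct hUne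
    have h2 : (df V).image (fun a => a + mn V) = V := df_reconstruct hVne
    rw [← h1, ← h2, hUD, hVD, hUV]
  refine ⟨D, S, ?_, ?_, ?_, ?_⟩
  · rw [ht, Finset.mem_filter, Finset.mem_powersetCard] at hDt
    exact hDt.1.2
  · intro s hs
    rw [hS, Finset.mem_image] at hs
    obtain ⟨U, hU, rfl⟩ := hs
    obtain ⟨hUP, _⟩ := hFP U hU
    exact (hPmem U hUP).1 (mn_mem (hPmem U hUP).2.2)
  · intro v hv
    rw [Finset.mem_add] at hv
    obtain ⟨a, ha, s, hs, rfl⟩ := hv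
    rw [hS, Finset.mem_image] at hs
    obtain ⟨U, hU, rfl⟩ := hs
    obtain ⟨hUP, hUD⟩ := hFP U hU
    rw [← hUD, df, Finset.mem_image] at ha
    obtain ⟨u, hu, rfl⟩ := ha
    have := mn_le hu
    have : u - mn U + mn U = u := by omega
    rw [this]
    exact (hPmem U hUP).1 hu
  · rw [div_le_iff₀ (by exact_mod_cast hMpos)]
    have : T.card.choose κ₁ ≤ S.card * M := by
      rw [hScard]
      calc T.card.choose κ₁ = P.card := hPcard.symm
        _ ≤ t.card * F.card := hbound
        _ ≤ M * F.card := Nat.mul_le_mul_right _ htcard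
        _ = F.card * M := Nat.mul_comm _ _
    exact_mod_cast this
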